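/- Let q be an odd prime power with q ≡ 3 (mod 4), and let χ be the quadratic character of F_q. Then ∑_{x ∈ F_q} χ((x²-1)(x²+4x-1)) = (∑_{x ∈ F_q} χ(x(x²-2x+5))) - 1. -/

import Mathlib

open Finset

section aux
variable {F : Type*} [Field F] [Fintype F] [DecidableEq F]

lemma lemA (hF2 : ringChar F ≠ 2) :
    ∑ x : F, quadraticChar F ((x ^ 2 - 1) * (x ^ 2 + 4 * x - 1)) =
      (∑ u : F, quadraticChar F (u * (u ^ 2 + u - 1))) - 1 := by
  classical
  have h2 : (2 : F) ≠ 0 := Ring.two_ne_zero hF2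
  have hmem : ∀ x : F, x ∈ univ.erase (1:F) → (x+1)/(x-1) ∈ univ.erase (1:F) := by
    intro x hx
    rw [mem_erase] at hx ⊢
    refine ⟨?_, mem_univ _⟩
    intro h
    have hx1 : x - 1 ≠ 0 := sub_ne_zero.mpr hx.1
    rw [div_eq_one_iff_eq hx1] at h
    apply h2
    linear_combination h
  have hinv : ∀ x : F, x ∈ univ.erase (1:F) → ((x+1)/(x-1)+1)/((x+1)/(x-1)-1) = x := by
    intro x hx
    rw [mem_erase] at hx
    have hx1 : x - 1 ≠ 0 := sub_ne_zero.mpr hx.1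
    have hu1 : (x+1)/(x-1) - 1 ≠ 0 := sub_ne_zero.mpr ((mem_erase.mp (hmem x (mem_erase.mpr hx))).1)
    have h11 : (1+1 : F) ≠ 0 := fun h => h2 (by linear_combination h)
    field_simp
    ring_nf
    simp [h2]
  have hval : ∀ x : F, x ∈ univ.erase (1:F) →
      quadraticChar F ((x ^ 2 - 1) * (x ^ 2 + 4 * x - 1)) =
      quadraticChar F (((x+1)/(x-1)) * (((x+1)/(x-1)) ^ 2 + ((x+1)/(x-1)) - 1)) := by
    intro x hx
    rw [mem_erase] at hx
    have hx1 : x - 1 ≠ 0 := sub_ne_zero.mpr hx.1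
    have key : (x ^ 2 - 1) * (x ^ 2 + 4 * x - 1) =
        (((x+1)/(x-1)) * (((x+1)/(x-1)) ^ 2 + ((x+1)/(x-1)) - 1)) * ((x-1)^2)^2 := by
      field_simp
      ring
    rw [key, map_mul, quadraticChar_sq_one' (pow_ne_zero 2 hx1), mul_one]
  have hbij : ∑ x ∈ univ.erase (1:F), quadraticChar F ((x ^ 2 - 1) * (x ^ 2 + 4 * x - 1))
      = ∑ u ∈ univ.erase (1:F), quadraticChar F (u * (u ^ 2 + u - 1)) :=
    Finset.sum_bij' (fun x _ => (x+1)/(x-1)) (fun u _ => (u+1)/(u-1)) hmem hmem hinv hinv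
      (fun x hx => hval x hx)
  have e1 : ∑ x : F, quadraticChar F ((x ^ 2 - 1) * (x ^ 2 + 4 * x - 1))
      = ∑ x ∈ univ.erase (1:F), quadraticChar F ((x ^ 2 - 1) * (x ^ 2 + 4 * x - 1)) := by
    rw [← Finset.sum_erase_add univ _ (mem_univ (1:F))]
    simp
  have e2 : ∑ u : F, quadraticChar F (u * (u ^ 2 + u - 1))
      = (∑ u ∈ univ.erase (1:F), quadraticChar F (u * (u ^ 2 + u - 1))) + 1 := by
    rw [← Finset.sum_erase_add univ _ (mem_univ (1:F))]
    norm_num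
  rw [e1, hbij, e2]
  ring


lemma lemC (hF2 : ringChar F ≠ 2) :
    ∑ u : F, quadraticChar F (u * (u ^ 2 + u - 1)) =
      ∑ s : F, quadraticChar F (s * (s ^ 2 - 2 * s + 5)) := by
  classical
  have h2 : (2 : F) ≠ 0 := Ring.two_ne_zero hF2
  have hpoint : ∀ x : F,
      (∑ t : F, if x ^ 2 - t * x - 1 = 0 then quadraticChar F (t + 1) else 0)
        = quadraticChar F (x * (x ^ 2 + x - 1)) := by
    intro x
    by_cases hx : x = 0
    · subst hx
      have hfalse : ∀ t : F, ((0:F) ^ 2 - t * 0 - 1 = 0) ↔ False := by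
        intro t
        simp
      simp only [hfalse, if_false, Finset.sum_const_zero, zero_mul, quadraticChar_zero]
    · have hcond : ∀ t : F, (x ^ 2 - t * x - 1 = 0) ↔ t = (x ^ 2 - 1) * x⁻¹ := by
        intro t
        constructor
        · intro h
          field_simp
          linear_combination -h
        · intro h
          subst h
          field_simp
          ring
      have hres : (∑ t : F, if x ^ 2 - t * x - 1 = 0 then quadraticChar F (t + 1) else 0)
          = ∑ t : F, if t = (x ^ 2 - 1) * x⁻¹ then quadraticChar F (t + 1) else 0 :=
        Finset.sum_congr rfl fun t _ => by rw [if_congr (hcond t) rfl rfl]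
      rw [hres, Finset.sum_ite_eq' univ ((x ^ 2 - 1) * x⁻¹) (fun t => quadraticChar F (t + 1))]
      simp only [mem_univ, if_true]
      have key : x * (x ^ 2 + x - 1) = ((x ^ 2 - 1) * x⁻¹ + 1) * x ^ 2 := by
        field_simp
        ring
      rw [key, map_mul, quadraticChar_sq_one' hx, mul_one]
  have hcard : ∀ t : F, (∑ x : F, if x ^ 2 - t * x - 1 = 0 then (1:ℤ) else 0)
      = quadraticChar F (t ^ 2 + 4) + 1 := by
    intro t
    obtain ⟨c, hcdef⟩ : ∃ c : F, c = t * 2⁻¹ := ⟨_, rfl⟩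
    have hc : c * 2 = t := by rw [hcdef]; field_simp
    have hch : (t : F) ^ 2 + 4 = (c ^ 2 + 1) * 2 ^ 2 := by
      rw [hcdef]
      field_simp
      ring
    have hqc : quadraticChar F (t ^ 2 + 4) = quadraticChar F (c ^ 2 + 1) := by
      rw [hch, map_mul, quadraticChar_sq_one' h2, mul_one]
    have hsq := quadraticChar_card_sqrts hF2 (c ^ 2 + 1)
    have hbij : (univ.filter fun x : F => x ^ 2 - t * x - 1 = 0).card
        = ({x : F | x ^ 2 = c ^ 2 + 1}).toFinset.card := by
      rw [Set.toFinset_setOf]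
      apply Finset.card_bij' (fun x _ => x - c) (fun y _ => y + c)
      · intro x hx
        rw [mem_filter] at hx
        rw [mem_filter]
        exact ⟨mem_univ _, by linear_combination hx.2 - x * hc⟩
      · intro y hy
        rw [mem_filter] at hy
        rw [mem_filter]
        refine ⟨mem_univ _, ?_⟩
        linear_combination hy.2 + (y + c) * hc
      · intro x _; ring
      · intro y _; ring
    rw [Finset.sum_boole, hbij, hsq, hqc]
  calc ∑ u : F, quadraticChar F (u * (u ^ 2 + u - 1))
      = ∑ x : F, ∑ t : F, (if x ^ 2 - t * x - 1 = 0 then quadraticChar F (t + 1) else 0) :=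
        (Finset.sum_congr rfl fun x _ => (hpoint x).symm)
    _ = ∑ t : F, ∑ x : F, (if x ^ 2 - t * x - 1 = 0 then quadraticChar F (t + 1) else 0) :=
        Finset.sum_comm
    _ = ∑ t : F, quadraticChar F (t + 1) * (quadraticChar F (t ^ 2 + 4) + 1) := by
        refine Finset.sum_congr rfl fun t _ => ?_
        rw [← hcard t, Finset.mul_sum]
        refine Finset.sum_congr rfl fun x _ => ?_
        rw [mul_ite, mul_one, mul_zero]
    _ = ∑ t : F, quadraticChar F ((t + 1) * (t ^ 2 + 4)) + ∑ t : F, quadraticChar F (t + 1) := by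
        rw [← Finset.sum_add_distrib]
        refine Finset.sum_congr rfl fun t _ => ?_
        rw [map_mul]; ring
    _ = ∑ t : F, quadraticChar F ((t + 1) * (t ^ 2 + 4)) := by
        have h0 : ∑ t : F, quadraticChar F (t + 1) = 0 := by
          rw [← quadraticChar_sum_zero hF2]
          exact Fintype.sum_equiv (Equiv.addRight (1:F)) _ _ (fun t => rfl)
        rw [h0, add_zero]
    _ = ∑ s : F, quadraticChar F (s * (s ^ 2 - 2 * s + 5)) := by
        refine Fintype.sum_equiv (Equiv.addRight (1:F)) _ _ fun t => ?_
        show _ = quadraticChar F ((t + 1) * ((t + 1) ^ 2 - 2 * (t + 1) + 5))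
        congr 1
        ring

end aux

theorem stmt_2 (F : Type*) [Field F] [Fintype F] [DecidableEq F]
    (hq3 : Fintype.card F % 4 = 3) :
    ∑ x : F, quadraticChar F ((x ^ 2 - 1) * (x ^ 2 + 4 * x - 1)) =
      (∑ x : F, quadraticChar F (x * (x ^ 2 - 2 * x + 5))) - 1 := by
  have hF2 : ringChar F ≠ 2 := fun h => by
    have := FiniteField.even_card_of_char_two h
    omega
  rw [lemA hF2, lemC hF2]
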